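/- Let g be a finite-dimensional semisimple Lie algebra over a field K of characteristic zero. Then for every x ∈ g and every odd natural number k, the trace of the k-th power of ad(x), i.e. Tr_g((ad x)^k), is zero. -/

import Mathlib

open Matrix in
/-- Trace of an odd power of a skew-adjoint endomorphism (wrt a nondegenerate
bilinear form) vanishes, in characteristic zero. -/
lemma trace_pow_odd_eq_zero_of_skew
    {K V : Type*} [Field K] [CharZero K] [AddCommGroup V] [Module K V]
    [FiniteDimensional K V]
    (B : LinearMap.BilinForm K V) (hB : B.Nondegenerate)
    (f : Module.End K V) (hf : ∀ y z, B (f y) z = - B y (f z))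
    (k : ℕ) (hk : Odd k) :
    LinearMap.trace K V (f ^ k) = 0 := by
  let b := Module.finBasis K V
  set A := LinearMap.toMatrix b b f with hA
  set G := LinearMap.BilinForm.toMatrix b B with hG
  have hdet : IsUnit G.det := by
    have := (LinearMap.BilinForm.nondegenerate_iff_det_ne_zero b).mp hB
    exact isUnit_iff_ne_zero.mpr this
  -- skew-adjointness in matrix form
  have hskew : Aᵀ * G = -(G * A) := by
    have h1 : B.compLeft f + B.compRight f = 0 := by
      ext y z
      rw [LinearMap.add_apply, LinearMap.add_apply, LinearMap.BilinForm.compLeft_apply,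
        LinearMap.BilinForm.compRight_apply, hf y z, LinearMap.zero_apply,
        LinearMap.zero_apply, neg_add_cancel]
    have h2 := congrArg (LinearMap.BilinForm.toMatrix b) h1
    rw [map_add, BilinForm.toMatrix_compLeft, BilinForm.toMatrix_compRight, map_zero] at h2
    rw [eq_neg_iff_add_eq_zero]
    exact h2
  -- powers
  have hpow : ∀ m : ℕ, (Aᵀ) ^ m * G = (-1 : K) ^ m • (G * A ^ m) := by
    intro m
    induction m with
    | zero => simp
    | succ m ih =>
      calc (Aᵀ) ^ (m + 1) * G = Aᵀ * ((Aᵀ) ^ m * G) := by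
            rw [pow_succ']; rw [Matrix.mul_assoc]
        _ = (-1 : K) ^ m • (Aᵀ * G * A ^ m) := by
            rw [ih, Matrix.mul_smul, Matrix.mul_assoc]
        _ = (-1 : K) ^ (m + 1) • (G * A ^ (m + 1)) := by
            rw [hskew, pow_succ' A, pow_succ (-1 : K)]
            rw [Matrix.neg_mul, smul_neg, Matrix.mul_assoc, mul_neg_one, neg_smul]
  have hodd : (A ^ k)ᵀ * G = -(G * A ^ k) := by
    rw [Matrix.transpose_pow, hpow k, hk.neg_one_pow]
    simp
  have htr : (A ^ k).trace = - (A ^ k).trace := by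
    have h3 : (A ^ k)ᵀ = -(G * A ^ k) * G⁻¹ := by
      rw [← hodd, Matrix.mul_assoc, Matrix.mul_nonsing_inv G hdet, Matrix.mul_one]
    calc (A ^ k).trace = ((A ^ k)ᵀ).trace := (Matrix.trace_transpose _).symm
      _ = (-(G * A ^ k) * G⁻¹).trace := by rw [h3]
      _ = -((G * A ^ k) * G⁻¹).trace := by rw [Matrix.neg_mul, Matrix.trace_neg]
      _ = -(G⁻¹ * (G * A ^ k)).trace := by rw [Matrix.trace_mul_comm]
      _ = - (A ^ k).trace := by
          rw [← Matrix.mul_assoc, Matrix.nonsing_inv_mul G hdet, Matrix.one_mul]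
  have htr0 : (A ^ k).trace = 0 := by
    have h2a : (2 : K) * (A ^ k).trace = 0 := by linear_combination htr
    exact (mul_eq_zero.mp h2a).resolve_left two_ne_zero
  have hmat : ∀ m : ℕ, LinearMap.toMatrix b b (f ^ m) = A ^ m := by
    intro m
    induction m with
    | zero => simp
    | succ m ih => rw [pow_succ, pow_succ, LinearMap.toMatrix_mul, ih]
  rw [LinearMap.trace_eq_matrix_trace K b, hmat k, htr0]

/-- For a finite-dimensional semisimple Lie algebra `L` over a field `K` of characteristic
zero, the trace of any odd power of `ad x` vanishes. -/
theorem trace_ad_pow_odd_eq_zero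
    {K : Type*} [Field K] [CharZero K]
    {L : Type*} [LieRing L] [LieAlgebra K L] [Module.Finite K L]
    [LieAlgebra.IsKilling K L] (x : L) (k : ℕ) (hk : Odd k) :
    LinearMap.trace K L ((LieAlgebra.ad K L x) ^ k) = 0 := by
  apply trace_pow_odd_eq_zero_of_skew (killingForm K L)
    (LieAlgebra.IsKilling.killingForm_nondegenerate K L) _ _ k hk
  intro y z
  exact LieModule.traceForm_apply_lie_apply' K L L x y z
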